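/- Let f₁, f₂ ∈ L²(𝕋;ℂ) satisfy the four orthogonality conditions ∫₀^{2π} f₁(x) dx = 0, ∫₀^{2π} f₂(x) dx = 0, ∫₀^{2π} (−f₁(x)·sin x + f₂(x)·cos x) dx = 0 and ∫₀^{2π} (f₁(x)·cos x + f₂(x)·sin x) dx = 0. Then there exist v₁, v₂ ∈ H¹(𝕋;ℂ) such that v₁′ + |D|v₂ = f₁ and −v₁ + (1/2π)∫₀^{2π} v₁(x) dx + v₂′ = f₂ in L²(𝕋;ℂ). -/

import Mathlib

open MeasureTheory Complex Filter Set

noncomputable section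

/-- 2π-periodicity. -/
def Per (f : ℝ → ℂ) : Prop := Function.Periodic f (2 * Real.pi)

/-- k-th Fourier coefficient of a 2π-periodic function. -/
def fc (f : ℝ → ℂ) (k : ℤ) : ℂ :=
  ∫ x in (0:ℝ)..(2 * Real.pi), Complex.exp (-Complex.I * (k : ℂ) * (x : ℂ)) * f x

/-- Membership in L²(𝕋;ℂ). -/
def MemL2 (f : ℝ → ℂ) : Prop :=
  Per f ∧ MemLp f 2 (volume.restrict (Set.Ioc (0:ℝ) (2 * Real.pi)))

/-- Equality in L²(𝕋;ℂ): almost-everywhere equality. -/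
def aeEq (f g : ℝ → ℂ) : Prop := f =ᵐ[volume] g

/-- `f ∈ H¹(𝕋;ℂ)` with (weak) derivative `g`. -/
def IsH1 (f g : ℝ → ℂ) : Prop :=
  Per f ∧ Per g ∧ MemL2 g ∧ ∀ x : ℝ, f x = f 0 + ∫ t in (0:ℝ)..x, g t

/-- `h = m(D) f`. -/
def IsMult (m : ℤ → ℝ) (f h : ℝ → ℂ) : Prop :=
  MemL2 h ∧ ∀ k : ℤ, fc h k = (m k : ℂ) * fc f k

namespace Stmt5

lemma TT_pos : (0:ℝ) < 2 * Real.pi := by positivity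

instance factTT : Fact ((0:ℝ) < 2 * Real.pi) := ⟨TT_pos⟩

abbrev μ0 : Measure ℝ := volume.restrict (Set.Ioc (0:ℝ) (2 * Real.pi))

instance : IsFiniteMeasure μ0 := by
  constructor
  rw [Measure.restrict_apply_univ, Real.volume_Ioc]
  exact ENNReal.ofReal_lt_top

lemma ker_cont (k : ℤ) : Continuous fun x : ℝ => Complex.exp (-Complex.I * k * x) :=
  Complex.continuous_exp.comp ((continuous_const.mul continuous_ofReal))

lemma ker_norm (k : ℤ) (x : ℝ) : ‖Complex.exp (-Complex.I * k * x)‖ = 1 := by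
  rw [show -Complex.I * (k:ℂ) * (x:ℝ) = ((-(k * x) : ℝ) : ℂ) * Complex.I by push_cast; ring]
  exact Complex.norm_exp_ofReal_mul_I _

lemma kerInt {f : ℝ → ℂ} {a b : ℝ} (hf : IntervalIntegrable f volume a b) (k : ℤ) :
    IntervalIntegrable (fun x => Complex.exp (-Complex.I * k * x) * f x) volume a b :=
  hf.continuousOn_mul (ker_cont k).continuousOn

lemma memL2_integrableOn {f : ℝ → ℂ} (hf : MemL2 f) :
    IntegrableOn f (Set.Ioc (0:ℝ) (2 * Real.pi)) volume :=
  hf.2.integrable (by norm_num)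

lemma memL2_intInt {f : ℝ → ℂ} (hf : MemL2 f) : IntervalIntegrable f volume 0 (2 * Real.pi) :=
  (intervalIntegrable_iff_integrableOn_Ioc_of_le TT_pos.le).2 (memL2_integrableOn hf)

lemma exp_TT (k : ℤ) : Complex.exp (-Complex.I * k * ((2 * Real.pi : ℝ) : ℂ)) = 1 := by
  rw [show -Complex.I * (k:ℂ) * ((2 * Real.pi : ℝ):ℂ) = ((-k : ℤ) : ℂ) * (2 * (Real.pi:ℂ) * Complex.I) by
    push_cast; ring]
  exact Complex.exp_int_mul_two_pi_mul_I (-k)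

lemma intInt_exp {k : ℤ} (hk : k ≠ 0) (a b : ℝ) :
    ∫ x in a..b, Complex.exp (-Complex.I * k * x)
      = (Complex.exp (-Complex.I * k * b) - Complex.exp (-Complex.I * k * a)) / (-Complex.I * k) := by
  have hc : -Complex.I * (k:ℂ) ≠ 0 := by
    apply mul_ne_zero (neg_ne_zero.2 Complex.I_ne_zero)
    exact_mod_cast hk
  exact integral_exp_mul_complex hc

lemma fc_zero (f : ℝ → ℂ) : fc f 0 = ∫ x in (0:ℝ)..(2 * Real.pi), f x := by
  unfold fc
  norm_num

lemma fc_const (c : ℂ) {k : ℤ} (hk : k ≠ 0) : fc (fun _ => c) k = 0 := by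
  unfold fc
  rw [intervalIntegral.integral_mul_const, intInt_exp hk]
  rw [exp_TT]
  norm_num [Complex.exp_zero]

lemma fc_add {f g : ℝ → ℂ} (hf : IntervalIntegrable f volume 0 (2 * Real.pi))
    (hg : IntervalIntegrable g volume 0 (2 * Real.pi)) (k : ℤ) :
    fc (fun x => f x + g x) k = fc f k + fc g k := by
  unfold fc
  rw [← intervalIntegral.integral_add (kerInt hf k) (kerInt hg k)]
  congr 1; ext x; ring

lemma fc_sub {f g : ℝ → ℂ} (hf : IntervalIntegrable f volume 0 (2 * Real.pi))
    (hg : IntervalIntegrable g volume 0 (2 * Real.pi)) (k : ℤ) :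
    fc (fun x => f x - g x) k = fc f k - fc g k := by
  unfold fc
  rw [← intervalIntegral.integral_sub (kerInt hf k) (kerInt hg k)]
  congr 1; ext x; ring

lemma per_intInt {f : ℝ → ℂ} (hp : Per f) (h0 : IntervalIntegrable f volume 0 (2 * Real.pi)) :
    ∀ a b : ℝ, IntervalIntegrable f volume a b := by
  set T : ℝ := 2 * Real.pi with hT
  have base : ∀ n : ℤ, IntervalIntegrable f volume (n * T) (n * T + T) := by
    intro n
    have h1 := h0.comp_add_right (-(n * T))
    have h2 : (fun x => f (x + -(n * T))) = f := by
      funext x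
      rw [show x + -(n * T) = x - n * T by ring]
      exact hp.sub_int_mul_eq n
    rw [h2] at h1
    have : (0 : ℝ) - -(n * T) = n * T := by ring
    rw [this] at h1
    have : T - -(n * T) = n * T + T := by ring
    rwa [this] at h1
  have step : ∀ n : ℕ, IntervalIntegrable f volume (-(n * T)) (n * T) := by
    intro n
    induction n with
    | zero => simp
    | succ m ih =>
      have h1 : IntervalIntegrable f volume (-((m+1 : ℕ) * T)) (-(m * T)) := by
        have := base (-(m+1))
        have e1 : ((-(m+1) : ℤ) : ℝ) * T = -((m+1 : ℕ) * T) := by push_cast; ring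
        have e2 : ((-(m+1) : ℤ) : ℝ) * T + T = -((m : ℕ) * T) := by push_cast; ring
        rw [e2] at this
        rwa [e1] at this
      have h2 : IntervalIntegrable f volume ((m : ℕ) * T) ((m+1 : ℕ) * T) := by
        have := base m
        have e2 : ((m : ℤ) : ℝ) * T + T = ((m+1 : ℕ) * T) := by push_cast; ring
        have e1 : ((m : ℤ) : ℝ) * T = ((m : ℕ) : ℝ) * T := by push_cast; ring
        rw [e2] at this
        rwa [e1] at this
      exact (h1.trans ih).trans h2
  intro a b
  obtain ⟨n, hn⟩ := exists_nat_ge ((max |a| |b|) / T)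
  have hTpos : (0:ℝ) < T := TT_pos
  have hmax : max |a| |b| ≤ n * T := by
    rw [div_le_iff₀ hTpos] at hn
    exact hn
  have hIcc : uIcc (-((n:ℝ) * T)) ((n:ℝ) * T) = Icc (-((n:ℝ) * T)) ((n:ℝ) * T) := by
    apply uIcc_of_le
    have : (0:ℝ) ≤ n * T := by positivity
    linarith
  have hmem : ∀ c : ℝ, |c| ≤ max |a| |b| → c ∈ uIcc (-((n:ℝ) * T)) ((n:ℝ) * T) := by
    intro c hc
    rw [hIcc]
    have h1 : |c| ≤ (n:ℝ) * T := le_trans hc hmax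
    exact abs_le.1 h1
  exact (step n).mono_set (uIcc_subset_uIcc (hmem a (le_max_left _ _)) (hmem b (le_max_right _ _)))


lemma fourier_eq (k : ℤ) (x : ℝ) :
    (fourier (-k) (x : AddCircle (2 * Real.pi)) : ℂ) = Complex.exp (-Complex.I * k * x) := by
  rw [fourier_coe_apply]
  congr 1
  have hπ : (Real.pi : ℂ) ≠ 0 := by exact_mod_cast Real.pi_ne_zero
  push_cast
  field_simp

lemma fc_eq_coeff (F : AddCircle (2 * Real.pi) → ℂ) (f : ℝ → ℂ)
    (hae : ∀ᵐ x ∂μ0, f x = F ↑x) (k : ℤ) :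
    fc f k = ((2 * Real.pi : ℝ) : ℂ) * fourierCoeff F k := by
  have h1 : fc f k
      = ∫ x in Set.Ioc (0:ℝ) (2 * Real.pi), Complex.exp (-Complex.I * k * x) * f x := by
    unfold fc; exact intervalIntegral.integral_of_le TT_pos.le
  have h2 : ∫ x in Set.Ioc (0:ℝ) (2 * Real.pi), Complex.exp (-Complex.I * k * x) * f x
      = ∫ x in Set.Ioc (0:ℝ) (2 * Real.pi),
          (fun z : AddCircle (2 * Real.pi) => (fourier (-k) z : ℂ) * F z) (x : AddCircle (2 * Real.pi)) := by
    refine integral_congr_ae ?_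
    filter_upwards [hae] with x hx
    simp only [fourier_eq, hx]
  have h3 := AddCircle.integral_preimage (2 * Real.pi) 0
      (fun z : AddCircle (2 * Real.pi) => (fourier (-k) z : ℂ) * F z)
  rw [zero_add] at h3
  rw [h1, h2, h3, AddCircle.volume_eq_smul_haarAddCircle, integral_smul_measure,
    ENNReal.toReal_ofReal TT_pos.le]
  unfold fourierCoeff
  rw [real_smul]
  congr 1

lemma memℓp_fc {f : ℝ → ℂ} (hf : MemL2 f) : Memℓp (fun k => fc f k) 2 := by
  obtain ⟨hper, hL2⟩ := hf
  set φ : ℝ → ℂ := hL2.aestronglyMeasurable.mk f with hφdef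
  have hφm : StronglyMeasurable φ := hL2.aestronglyMeasurable.stronglyMeasurable_mk
  have hfφ : f =ᵐ[μ0] φ := hL2.aestronglyMeasurable.ae_eq_mk
  have hφ2 : MemLp φ 2 μ0 := hL2.ae_eq hfφ
  set F : AddCircle (2 * Real.pi) → ℂ := AddCircle.liftIoc (2 * Real.pi) 0 φ with hFdef
  have hFm : StronglyMeasurable F := by
    apply hφm.comp_measurable
    exact measurable_subtype_coe.comp (AddCircle.measurableEquivIoc (2 * Real.pi) 0).measurable
  have hcoe : ∀ᵐ x ∂μ0, φ x = F ↑x := by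
    refine (ae_restrict_iff' measurableSet_Ioc).2 (Filter.Eventually.of_forall fun x hx => ?_)
    rw [hFdef, AddCircle.liftIoc_coe_apply]
    rwa [zero_add]
  have hmap : Measure.map ((↑) : ℝ → AddCircle (2 * Real.pi)) μ0
      = (volume : Measure (AddCircle (2 * Real.pi))) := by
    have := (AddCircle.measurePreserving_mk (2 * Real.pi) 0).map_eq
    rwa [zero_add] at this
  have hmk : Measurable ((↑) : ℝ → AddCircle (2 * Real.pi)) :=
    (AddCircle.measurePreserving_mk (2 * Real.pi) 0).measurable
  have hF2vol : MemLp F 2 (volume : Measure (AddCircle (2 * Real.pi))) := by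
    rw [← hmap]
    rw [memLp_map_measure_iff (by rw [hmap]; exact hFm.aestronglyMeasurable) hmk.aemeasurable]
    exact hφ2.ae_eq hcoe
  have hofR : ENNReal.ofReal (2 * Real.pi) ≠ 0 := (ENNReal.ofReal_pos.mpr TT_pos).ne'
  have hF2 : MemLp F 2 (AddCircle.haarAddCircle : Measure (AddCircle (2 * Real.pi))) := by
    have hh : (AddCircle.haarAddCircle : Measure (AddCircle (2 * Real.pi)))
        = (ENNReal.ofReal (2 * Real.pi))⁻¹ • (volume : Measure (AddCircle (2 * Real.pi))) := by
      rw [AddCircle.volume_eq_smul_haarAddCircle, smul_smul,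
        ENNReal.inv_mul_cancel hofR ENNReal.ofReal_ne_top, one_smul]
    rw [hh]
    exact hF2vol.smul_measure (ENNReal.inv_ne_top.mpr hofR)
  set Φ : Lp ℂ 2 (AddCircle.haarAddCircle : Measure (AddCircle (2 * Real.pi))) := hF2.toLp F with hΦdef
  have hrepr : ∀ k : ℤ, fourierCoeff F k = fourierBasis.repr Φ k := by
    intro k
    rw [fourierBasis_repr]
    unfold fourierCoeff
    refine integral_congr_ae ?_
    filter_upwards [hF2.coeFn_toLp] with z hz
    rw [hz]
  have hl : Memℓp (fun k : ℤ => fourierCoeff F k) 2 := by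
    rw [show (fun k : ℤ => fourierCoeff F k) = ⇑(fourierBasis.repr Φ) from funext hrepr]
    exact lp.memℓp (fourierBasis.repr Φ)
  have hae : ∀ᵐ x ∂μ0, f x = F ↑x := by
    filter_upwards [hfφ, hcoe] with x h1 h2
    rw [h1, h2]
  have hfc : (fun k : ℤ => fc f k) = fun k : ℤ => ((2 * Real.pi : ℝ) : ℂ) * fourierCoeff F k :=
    funext fun k => fc_eq_coeff F f hae k
  rw [hfc]
  have := hl.const_smul (((2 * Real.pi : ℝ) : ℂ))
  exact this

lemma synth (d : ℤ → ℂ) (hd : Memℓp d 2) :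
    ∃ g : ℝ → ℂ, MemL2 g ∧ ∀ k : ℤ, fc g k = ((2 * Real.pi : ℝ) : ℂ) * d k := by
  set dl : lp (fun _ : ℤ => ℂ) 2 := ⟨d, hd⟩ with hdl
  set G : Lp ℂ 2 (AddCircle.haarAddCircle : Measure (AddCircle (2 * Real.pi))) :=
    fourierBasis.repr.symm dl with hG
  refine ⟨fun x : ℝ => (G : AddCircle (2 * Real.pi) → ℂ) (x : AddCircle (2 * Real.pi)), ⟨?_, ?_⟩, ?_⟩
  · intro x
    simp only [AddCircle.coe_add_period]
  · have h1 : MemLp (⇑G) 2 (AddCircle.haarAddCircle : Measure (AddCircle (2 * Real.pi))) := Lp.memLp G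
    have h2 : MemLp (⇑G) 2 (volume : Measure (AddCircle (2 * Real.pi))) := by
      rw [AddCircle.volume_eq_smul_haarAddCircle]
      exact h1.smul_measure ENNReal.ofReal_ne_top
    have h3 := h2.comp_measurePreserving (AddCircle.measurePreserving_mk (2 * Real.pi) 0)
    rw [zero_add] at h3
    exact h3
  · intro k
    have hae : ∀ᵐ x ∂μ0, (fun x : ℝ => (G : AddCircle (2 * Real.pi) → ℂ) (x : AddCircle (2 * Real.pi))) x
        = (G : AddCircle (2 * Real.pi) → ℂ) ↑x := Filter.Eventually.of_forall fun x => rfl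
    rw [fc_eq_coeff (⇑G) _ hae k]
    congr 1
    have h1 : fourierCoeff (⇑G) k = fourierBasis.repr G k := (fourierBasis_repr G k).symm
    rw [h1, hG, LinearIsometryEquiv.apply_symm_apply]


lemma fc_primitive {g : ℝ → ℂ} (hg : IntegrableOn g (Set.Ioc (0:ℝ) (2 * Real.pi)) volume)
    {k : ℤ} (hk : k ≠ 0) :
    fc (fun x => ∫ t in (0:ℝ)..x, g t) k = (Complex.I * k)⁻¹ * (fc g k - fc g 0) := by
  have hkC : (k:ℂ) ≠ 0 := by exact_mod_cast hk
  have hIk : Complex.I * (k:ℂ) ≠ 0 := mul_ne_zero Complex.I_ne_zero hkC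
  have hnIk : -Complex.I * (k:ℂ) ≠ 0 := by
    simpa [neg_mul] using neg_ne_zero.mpr hIk
  have hgm : AEStronglyMeasurable g μ0 := hg.aestronglyMeasurable
  have hgInt : Integrable g μ0 := hg
  set S : Set (ℝ × ℝ) := {p : ℝ × ℝ | 0 < p.2 ∧ p.2 ≤ p.1} with hSdef
  have hSm : MeasurableSet S := by
    have : S = {p : ℝ × ℝ | 0 < p.2} ∩ {p : ℝ × ℝ | p.2 ≤ p.1} := rfl
    rw [this]
    exact (measurableSet_lt measurable_const measurable_snd).inter
      (measurableSet_le measurable_snd measurable_fst)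
  set P : ℝ × ℝ → ℂ :=
    fun p => Complex.exp (-Complex.I * k * p.1) * S.indicator (fun q => g q.2) p with hPdef
  have hPm : AEStronglyMeasurable P (μ0.prod μ0) := by
    apply AEStronglyMeasurable.mul
    · exact ((ker_cont k).comp continuous_fst).aestronglyMeasurable
    · exact (hgm.comp_snd).indicator hSm
  have hQ : Integrable (fun p : ℝ × ℝ => g p.2) (μ0.prod μ0) := by
    have h1 : Integrable g ((μ0.prod μ0).map Prod.snd) := by
      rw [Measure.map_snd_prod]
      exact hgInt.smul_measure (measure_ne_top μ0 univ)
    exact (integrable_map_measure h1.aestronglyMeasurable measurable_snd.aemeasurable).1 h1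
  have hP : Integrable P (μ0.prod μ0) := by
    refine Integrable.mono' hQ.norm hPm (Filter.Eventually.of_forall fun p => ?_)
    rw [hPdef]
    simp only [norm_mul, ker_norm, one_mul]
    exact norm_indicator_le_norm_self (fun q : ℝ × ℝ => g q.2) p
  have hP' : Integrable (Function.uncurry fun x t => P (x, t)) (μ0.prod μ0) := hP
  have swap := MeasureTheory.integral_integral_swap hP'
  have hL : (∫ x, ∫ t, P (x, t) ∂μ0 ∂μ0) = fc (fun x => ∫ t in (0:ℝ)..x, g t) k := by
    unfold fc
    rw [intervalIntegral.integral_of_le TT_pos.le]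
    refine integral_congr_ae ((ae_restrict_iff' measurableSet_Ioc).2
      (Filter.Eventually.of_forall fun x hx => ?_))
    have hx0 : (0:ℝ) ≤ x := le_of_lt hx.1
    have hsub : Set.Ioc (0:ℝ) x ⊆ Set.Ioc (0:ℝ) (2 * Real.pi) := Set.Ioc_subset_Ioc le_rfl hx.2
    calc ∫ t, P (x, t) ∂μ0
        = ∫ t, Complex.exp (-Complex.I * k * x) * (Set.Ioc (0:ℝ) x).indicator g t ∂μ0 := by
          refine integral_congr_ae (Filter.Eventually.of_forall fun t => ?_)
          rw [hPdef]
          simp only [hSdef, Set.indicator_apply, Set.mem_setOf_eq, Set.mem_Ioc]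
      _ = Complex.exp (-Complex.I * k * x) * ∫ t, (Set.Ioc (0:ℝ) x).indicator g t ∂μ0 :=
          integral_const_mul _ _
      _ = Complex.exp (-Complex.I * k * x) * ∫ t in Set.Ioc (0:ℝ) x, g t := by
          rw [integral_indicator measurableSet_Ioc, Measure.restrict_restrict measurableSet_Ioc,
            Set.inter_eq_left.2 hsub]
      _ = Complex.exp (-Complex.I * k * x) * ∫ t in (0:ℝ)..x, g t := by
          rw [intervalIntegral.integral_of_le hx0]
  have hR : (∫ t, ∫ x, P (x, t) ∂μ0 ∂μ0) = (Complex.I * k)⁻¹ * (fc g k - fc g 0) := by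
    have hR1 : ∀ t ∈ Set.Ioc (0:ℝ) (2 * Real.pi), (∫ x, P (x, t) ∂μ0)
        = (Complex.I * k)⁻¹ * (Complex.exp (-Complex.I * k * t) * g t)
          - (Complex.I * k)⁻¹ * g t := by
      intro t ht
      have hpt : ∀ x : ℝ, P (x, t)
          = (Set.Ici t).indicator (fun x : ℝ => Complex.exp (-Complex.I * k * x)) x * g t := by
        intro x
        rw [hPdef]
        simp only [hSdef, Set.indicator_apply, Set.mem_setOf_eq, Set.mem_Ici]
        by_cases hc : t ≤ x
        · rw [if_pos ⟨ht.1, hc⟩, if_pos hc]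
        · rw [if_neg (fun hcon => hc hcon.2), if_neg hc, mul_zero, zero_mul]
      simp_rw [hpt]
      rw [integral_mul_const, integral_indicator measurableSet_Ici,
        Measure.restrict_restrict measurableSet_Ici]
      have hint : Set.Ici t ∩ Set.Ioc (0:ℝ) (2 * Real.pi) = Set.Icc t (2 * Real.pi) := by
        ext x
        simp only [Set.mem_inter_iff, Set.mem_Ici, Set.mem_Ioc, Set.mem_Icc]
        constructor
        · rintro ⟨h1, _, h3⟩; exact ⟨h1, h3⟩
        · rintro ⟨h1, h2⟩; exact ⟨h1, lt_of_lt_of_le ht.1 h1, h2⟩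
      rw [hint, integral_Icc_eq_integral_Ioc, ← intervalIntegral.integral_of_le ht.2,
        intInt_exp hk, exp_TT]
      field_simp
      ring
    rw [integral_congr_ae ((ae_restrict_iff' measurableSet_Ioc).2
      (Filter.Eventually.of_forall hR1))]
    have hker : Integrable (fun t : ℝ => Complex.exp (-Complex.I * k * t) * g t) μ0 :=
      hgInt.bdd_mul ((ker_cont k).aestronglyMeasurable) (c := 1) (Filter.Eventually.of_forall fun x => le_of_eq (ker_norm k x))
    rw [integral_sub (hker.const_mul _) (hgInt.const_mul _), integral_const_mul, integral_const_mul]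
    have e1 : fc g k = ∫ t : ℝ, Complex.exp (-Complex.I * k * t) * g t ∂μ0 := by
      unfold fc; exact intervalIntegral.integral_of_le TT_pos.le
    have e2 : fc g 0 = ∫ t, g t ∂μ0 := by
      rw [fc_zero]; exact intervalIntegral.integral_of_le TT_pos.le
    rw [← e1, ← e2]
    ring
  rw [← hL, swap, hR]


lemma cont_cos : Continuous fun x : ℝ => ((Real.cos x : ℝ) : ℂ) :=
  Complex.continuous_ofReal.comp Real.continuous_cos

lemma cont_sin : Continuous fun x : ℝ => ((Real.sin x : ℝ) : ℂ) :=
  Complex.continuous_ofReal.comp Real.continuous_sin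

lemma ortho_one {f₁ f₂ : ℝ → ℂ}
    (h1 : IntervalIntegrable f₁ volume 0 (2 * Real.pi))
    (h2 : IntervalIntegrable f₂ volume 0 (2 * Real.pi))
    (o3 : (∫ x in (0:ℝ)..(2 * Real.pi),
        (-(f₁ x) * (Real.sin x : ℂ) + f₂ x * (Real.cos x : ℂ))) = 0)
    (o4 : (∫ x in (0:ℝ)..(2 * Real.pi),
        (f₁ x * (Real.cos x : ℂ) + f₂ x * (Real.sin x : ℂ))) = 0) :
    fc f₁ 1 + Complex.I * fc f₂ 1 = 0 ∧ fc f₁ (-1) - Complex.I * fc f₂ (-1) = 0 := by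
  have hker1 : ∀ x : ℝ, Complex.exp (-Complex.I * ((1:ℤ):ℂ) * x)
      = (Real.cos x : ℂ) - (Real.sin x : ℂ) * Complex.I := by
    intro x
    rw [show -Complex.I * ((1:ℤ):ℂ) * (x:ℂ) = ((-x : ℝ) : ℂ) * Complex.I by push_cast; ring,
      Complex.exp_mul_I, show ((-x : ℝ) : ℂ) = -(x:ℂ) by push_cast; ring,
      Complex.cos_neg, Complex.sin_neg, ← Complex.ofReal_cos, ← Complex.ofReal_sin]
    ring
  have hkerm1 : ∀ x : ℝ, Complex.exp (-Complex.I * (((-1):ℤ):ℂ) * x)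
      = (Real.cos x : ℂ) + (Real.sin x : ℂ) * Complex.I := by
    intro x
    rw [show -Complex.I * (((-1):ℤ):ℂ) * (x:ℂ) = ((x : ℝ) : ℂ) * Complex.I by push_cast; ring,
      Complex.exp_mul_I, ← Complex.ofReal_cos, ← Complex.ofReal_sin]
  have intA : IntervalIntegrable
      (fun x => f₁ x * (Real.cos x : ℂ) + f₂ x * (Real.sin x : ℂ)) volume 0 (2 * Real.pi) :=
    (h1.mul_continuousOn cont_cos.continuousOn).add (h2.mul_continuousOn cont_sin.continuousOn)
  have intB : IntervalIntegrable
      (fun x => -(f₁ x) * (Real.sin x : ℂ) + f₂ x * (Real.cos x : ℂ)) volume 0 (2 * Real.pi) :=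
    (h1.neg.mul_continuousOn cont_sin.continuousOn).add (h2.mul_continuousOn cont_cos.continuousOn)
  constructor
  · have e1 : fc f₁ 1 + Complex.I * fc f₂ 1
        = ∫ x in (0:ℝ)..(2 * Real.pi),
            ((f₁ x * (Real.cos x : ℂ) + f₂ x * (Real.sin x : ℂ))
              + Complex.I * (-(f₁ x) * (Real.sin x : ℂ) + f₂ x * (Real.cos x : ℂ))) := by
      unfold fc
      rw [← intervalIntegral.integral_const_mul, ← intervalIntegral.integral_add (kerInt h1 1)
        ((kerInt h2 1).const_mul Complex.I)]
      refine intervalIntegral.integral_congr fun x _ => ?_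
      rw [hker1 x]
      linear_combination (-(f₂ x) * (Real.sin x : ℂ)) * Complex.I_sq
    rw [e1, intervalIntegral.integral_add intA (intB.const_mul Complex.I),
      intervalIntegral.integral_const_mul, o3, o4]
    ring
  · have e1 : fc f₁ (-1) - Complex.I * fc f₂ (-1)
        = ∫ x in (0:ℝ)..(2 * Real.pi),
            ((f₁ x * (Real.cos x : ℂ) + f₂ x * (Real.sin x : ℂ))
              - Complex.I * (-(f₁ x) * (Real.sin x : ℂ) + f₂ x * (Real.cos x : ℂ))) := by
      unfold fc
      rw [← intervalIntegral.integral_const_mul, ← intervalIntegral.integral_sub (kerInt h1 (-1))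
        ((kerInt h2 (-1)).const_mul Complex.I)]
      refine intervalIntegral.integral_congr fun x _ => ?_
      rw [hkerm1 x]
      linear_combination (-(f₂ x) * (Real.sin x : ℂ)) * Complex.I_sq
    rw [e1, intervalIntegral.integral_sub intA (intB.const_mul Complex.I),
      intervalIntegral.integral_const_mul, o3, o4]
    ring

end Stmt5

open Stmt5

/-- if `f₁, f₂ ∈ L²(𝕋;ℂ)` satisfy the four orthogonality conditions,
then the system `v₁′ + |D|v₂ = f₁`, `−v₁ + (1/2π)∫₀^{2π} v₁ + v₂′ = f₂` has a solution
`(v₁, v₂) ∈ (H¹(𝕋;ℂ))²`. -/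
theorem statement5 (f₁ f₂ : ℝ → ℂ) (hf₁ : MemL2 f₁) (hf₂ : MemL2 f₂)
    (o1 : (∫ x in (0:ℝ)..(2 * Real.pi), f₁ x) = 0)
    (o2 : (∫ x in (0:ℝ)..(2 * Real.pi), f₂ x) = 0)
    (o3 : (∫ x in (0:ℝ)..(2 * Real.pi),
        (-(f₁ x) * (Real.sin x : ℂ) + f₂ x * (Real.cos x : ℂ))) = 0)
    (o4 : (∫ x in (0:ℝ)..(2 * Real.pi),
        (f₁ x * (Real.cos x : ℂ) + f₂ x * (Real.sin x : ℂ))) = 0) :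
    ∃ v₁ v₂ g₁ g₂ h : ℝ → ℂ, IsH1 v₁ g₁ ∧ IsH1 v₂ g₂ ∧
      IsMult (fun k => |(k : ℝ)|) v₂ h ∧
      aeEq (fun x => g₁ x + h x) f₁ ∧
      aeEq (fun x => -v₁ x + (((2 * Real.pi)⁻¹ : ℝ) : ℂ) *
        (∫ t in (0:ℝ)..(2 * Real.pi), v₁ t) + g₂ x) f₂ := by
  classical
  have hπC : ((2 * Real.pi : ℝ) : ℂ) ≠ 0 := by
    exact_mod_cast TT_pos.ne'
  have hf1i : IntervalIntegrable f₁ volume 0 (2 * Real.pi) := memL2_intInt hf₁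
  have hf2i : IntervalIntegrable f₂ volume 0 (2 * Real.pi) := memL2_intInt hf₂
  have ha0 : fc f₁ 0 = 0 := by rw [fc_zero]; exact o1
  have hb0 : fc f₂ 0 = 0 := by rw [fc_zero]; exact o2
  obtain ⟨hA1, hA2⟩ := ortho_one hf1i hf2i o3 o4
  -- the target Fourier coefficients of g₁ = v₁'
  set d : ℤ → ℂ := fun k => if 2 ≤ |k| then
      ((k:ℂ) * fc f₁ k + Complex.I * ((|(k:ℝ)| : ℝ) : ℂ) * fc f₂ k)
        / ((k:ℂ) - ((Int.sign k : ℤ) : ℂ)) else 0 with hddef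
  have hd0 : d 0 = 0 := by rw [hddef]; norm_num
  -- square-summability of d
  have hsq : ∀ (f : ℝ → ℂ), MemL2 f → Summable (fun k : ℤ => ‖fc f k‖^2) := by
    intro f hf
    have h := memℓp_fc hf
    rw [memℓp_gen_iff (by norm_num : 0 < (2:ENNReal).toReal)] at h
    have e : ∀ x : ℝ, x ^ ((2:ENNReal)).toReal = x ^ 2 := fun x => by
      rw [show ((2:ENNReal)).toReal = ((2:ℕ):ℝ) by norm_num, Real.rpow_natCast]
    simpa [e] using h
  have hdb : ∀ k : ℤ, ‖d k‖^2 ≤ 8 * ‖fc f₁ k‖^2 + 8 * ‖fc f₂ k‖^2 := by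
    intro k
    by_cases h2 : 2 ≤ |k|
    · have hknz : k ≠ 0 := by
        intro hcon; rw [hcon] at h2; norm_num at h2
      have hK2 : (2:ℝ) ≤ |(k:ℝ)| := by
        rw [← Int.cast_abs]; exact_mod_cast h2
      set A := ‖fc f₁ k‖ with hA
      set B := ‖fc f₂ k‖ with hB
      set K := |(k:ℝ)| with hK
      have hA0 : 0 ≤ A := norm_nonneg _
      have hB0 : 0 ≤ B := norm_nonneg _
      have hnum : ‖(k:ℂ) * fc f₁ k + Complex.I * ((|(k:ℝ)| : ℝ) : ℂ) * fc f₂ k‖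
          ≤ K * A + K * B := by
        refine le_trans (norm_add_le _ _) ?_
        have e1 : ‖(k:ℂ) * fc f₁ k‖ = K * A := by
          rw [norm_mul]
          congr 1
          rw [show ((k:ℤ):ℂ) = (((k:ℝ)):ℂ) by push_cast; ring, Complex.norm_real,
            Real.norm_eq_abs]
        have e2 : ‖Complex.I * ((|(k:ℝ)| : ℝ) : ℂ) * fc f₂ k‖ = K * B := by
          rw [norm_mul, norm_mul, Complex.norm_I, one_mul, Complex.norm_real,
            Real.norm_eq_abs, _root_.abs_abs]
        rw [e1, e2]
      have hdenlb : K - 1 ≤ ‖(k:ℂ) - ((Int.sign k : ℤ) : ℂ)‖ := by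
        have e1 : ‖(k:ℂ) - ((Int.sign k : ℤ) : ℂ)‖ = |(k:ℝ) - ((Int.sign k : ℤ):ℝ)| := by
          rw [show (k:ℂ) - ((Int.sign k : ℤ) : ℂ) = (((k:ℝ) - ((Int.sign k : ℤ):ℝ) : ℝ):ℂ) by
            push_cast; ring, Complex.norm_real, Real.norm_eq_abs]
        rw [e1]
        have h3 : |((Int.sign k : ℤ):ℝ)| = 1 := by
          have : Int.sign k = 1 ∨ Int.sign k = -1 := by
            rcases lt_trichotomy k 0 with h | h | h
            · exact Or.inr (Int.sign_eq_neg_one_iff_neg.mpr h)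
            · exact absurd h hknz
            · exact Or.inl (Int.sign_eq_one_iff_pos.mpr h)
          rcases this with h | h <;> rw [h] <;> norm_num
        calc K - 1 = |(k:ℝ)| - |((Int.sign k : ℤ):ℝ)| := by rw [h3, hK]
        _ ≤ |(k:ℝ) - ((Int.sign k : ℤ):ℝ)| := abs_sub_abs_le_abs_sub _ _
      have hdenpos : (0:ℝ) < ‖(k:ℂ) - ((Int.sign k : ℤ) : ℂ)‖ := by
        calc (0:ℝ) < K - 1 := by linarith
        _ ≤ _ := hdenlb
      have hdk : ‖d k‖ ≤ 2 * (A + B) := by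
        rw [hddef]
        simp only [if_pos h2]
        rw [norm_div]
        rw [div_le_iff₀ hdenpos]
        calc ‖(k:ℂ) * fc f₁ k + Complex.I * ((|(k:ℝ)| : ℝ) : ℂ) * fc f₂ k‖
            ≤ K * A + K * B := hnum
          _ ≤ 2 * (A + B) * (K - 1) := by nlinarith
          _ ≤ 2 * (A + B) * ‖(k:ℂ) - ((Int.sign k : ℤ) : ℂ)‖ := by nlinarith
      have hd0' : (0:ℝ) ≤ ‖d k‖ := norm_nonneg _
      nlinarith [sq_nonneg (A - B), sq_nonneg (A + B), hd0', hdk, hA0, hB0]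
    · rw [hddef]
      simp only [if_neg h2]
      norm_num
      positivity
  have hd2 : Memℓp d 2 := by
    apply memℓp_gen
    have e : ∀ x : ℝ, x ^ ((2:ENNReal)).toReal = x ^ 2 := fun x => by
      rw [show ((2:ENNReal)).toReal = ((2:ℕ):ℝ) by norm_num, Real.rpow_natCast]
    simp only [e]
    exact Summable.of_nonneg_of_le (fun k => sq_nonneg _) hdb
      (((hsq f₁ hf₁).mul_left 8).add ((hsq f₂ hf₂).mul_left 8))
  -- synthesize g₁
  obtain ⟨g₁, hg₁L2, hg₁fc⟩ := synth ((((2 * Real.pi : ℝ) : ℂ))⁻¹ • d) (hd2.const_smul _)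
  have hfcg1 : ∀ k : ℤ, fc g₁ k = d k := by
    intro k
    rw [hg₁fc k]
    simp only [Pi.smul_apply, smul_eq_mul]
    rw [← mul_assoc, mul_inv_cancel₀ hπC, one_mul]
  have hg1i : IntervalIntegrable g₁ volume 0 (2 * Real.pi) := memL2_intInt hg₁L2
  have hg1ii : ∀ a b : ℝ, IntervalIntegrable g₁ volume a b := per_intInt hg₁L2.1 hg1i
  have hIg₁ : (∫ t in (0:ℝ)..(2 * Real.pi), g₁ t) = 0 := by
    rw [← fc_zero, hfcg1 0, hd0]
  set v₁ : ℝ → ℂ := fun x => ∫ t in (0:ℝ)..x, g₁ t with hv₁def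
  have hv₁per : Per v₁ := by
    intro x
    have h1 : (∫ t in x..(x + 2 * Real.pi), g₁ t) = ∫ t in (0:ℝ)..(0 + 2 * Real.pi), g₁ t :=
      hg₁L2.1.intervalIntegral_add_eq x 0
    have h2 : v₁ (x + 2 * Real.pi) = v₁ x + ∫ t in x..(x + 2 * Real.pi), g₁ t := by
      rw [hv₁def]
      exact (intervalIntegral.integral_add_adjacent_intervals (hg1ii 0 x) (hg1ii x _)).symm
    rw [h2, h1, zero_add, hIg₁, add_zero]
  have hv₁H1 : IsH1 v₁ g₁ := by
    refine ⟨hv₁per, hg₁L2.1, hg₁L2, fun x => ?_⟩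
    have : v₁ 0 = 0 := intervalIntegral.integral_same
    rw [this, zero_add]
  have hv₁cont : Continuous v₁ := intervalIntegral.continuous_primitive hg1ii 0
  have hv₁i : IntervalIntegrable v₁ volume 0 (2 * Real.pi) := hv₁cont.intervalIntegrable _ _
  have hv₁L2 : MemL2 v₁ := by
    refine ⟨hv₁per, ?_⟩
    obtain ⟨C, hC⟩ := isCompact_Icc.exists_bound_of_continuousOn
      (hv₁cont.continuousOn (s := Set.Icc (0:ℝ) (2 * Real.pi)))
    refine MemLp.of_bound hv₁cont.aestronglyMeasurable C ?_
    refine (ae_restrict_iff' measurableSet_Ioc).2 (Filter.Eventually.of_forall fun x hx => ?_)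
    exact hC x ⟨hx.1.le, hx.2⟩
  set C0 : ℂ := (((2 * Real.pi)⁻¹ : ℝ) : ℂ) * (∫ t in (0:ℝ)..(2 * Real.pi), v₁ t) with hC0def
  set g₂ : ℝ → ℂ := fun x => f₂ x + v₁ x - C0 with hg₂def
  have hg₂per : Per g₂ := by
    intro x
    rw [hg₂def]
    simp only
    rw [hf₂.1 x, hv₁per x]
  have hg₂mem : MemLp g₂ 2 μ0 := by
    exact (hf₂.2.add hv₁L2.2).sub (memLp_const C0)
  have hg₂L2 : MemL2 g₂ := ⟨hg₂per, hg₂mem⟩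
  have hg2i : IntervalIntegrable g₂ volume 0 (2 * Real.pi) := memL2_intInt hg₂L2
  have hg2ii : ∀ a b : ℝ, IntervalIntegrable g₂ volume a b := per_intInt hg₂per hg2i
  have hIg₂ : (∫ t in (0:ℝ)..(2 * Real.pi), g₂ t) = 0 := by
    rw [hg₂def]
    simp only
    rw [intervalIntegral.integral_sub (hf2i.add hv₁i) intervalIntegrable_const,
      intervalIntegral.integral_add hf2i hv₁i, o2, zero_add,
      intervalIntegral.integral_const, hC0def, real_smul]
    have he : ((2 * Real.pi - 0 : ℝ) : ℂ) * (((2 * Real.pi)⁻¹ : ℝ) : ℂ) = 1 := by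
      have h' := hπC
      push_cast at h'
      push_cast
      field_simp
      ring
    rw [← mul_assoc, he, one_mul, sub_self]
  set v₂ : ℝ → ℂ := fun x => ∫ t in (0:ℝ)..x, g₂ t with hv₂def
  have hv₂per : Per v₂ := by
    intro x
    have h1 : (∫ t in x..(x + 2 * Real.pi), g₂ t) = ∫ t in (0:ℝ)..(0 + 2 * Real.pi), g₂ t :=
      hg₂per.intervalIntegral_add_eq x 0
    have h2 : v₂ (x + 2 * Real.pi) = v₂ x + ∫ t in x..(x + 2 * Real.pi), g₂ t := by
      rw [hv₂def]
      exact (intervalIntegral.integral_add_adjacent_intervals (hg2ii 0 x) (hg2ii x _)).symm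
    rw [h2, h1, zero_add, hIg₂, add_zero]
  have hv₂H1 : IsH1 v₂ g₂ := by
    refine ⟨hv₂per, hg₂per, hg₂L2, fun x => ?_⟩
    have : v₂ 0 = 0 := intervalIntegral.integral_same
    rw [this, zero_add]
  set hh : ℝ → ℂ := fun x => f₁ x - g₁ x with hhdef
  have hhL2 : MemL2 hh := ⟨fun x => by rw [hhdef]; simp only; rw [hf₁.1 x, hg₁L2.1 x],
    hf₁.2.sub hg₁L2.2⟩
  have hfch : ∀ k : ℤ, fc hh k = fc f₁ k - d k := by
    intro k
    rw [hhdef, fc_sub hf1i hg1i k, hfcg1 k]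
  -- the multiplier identity
  have hmult : ∀ k : ℤ, fc hh k = ((|(k : ℝ)| : ℝ) : ℂ) * fc v₂ k := by
    intro k
    by_cases hk : k = 0
    · subst hk
      rw [hfch 0, ha0, hd0]
      norm_num
    · have hkC : (k:ℂ) ≠ 0 := by exact_mod_cast hk
      have hIk : Complex.I * (k:ℂ) ≠ 0 := mul_ne_zero Complex.I_ne_zero hkC
      have hfcg₂0 : fc g₂ 0 = 0 := by rw [fc_zero]; exact hIg₂
      have hfcv₁k : fc v₁ k = (Complex.I * k)⁻¹ * d k := by
        rw [hv₁def, fc_primitive (memL2_integrableOn hg₁L2) hk, hfcg1 k, hfcg1 0, hd0, sub_zero]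
      have hfcg₂k : fc g₂ k = fc f₂ k + (Complex.I * k)⁻¹ * d k := by
        have h1 : fc g₂ k = fc (fun x => f₂ x + v₁ x) k - fc (fun _ => C0) k := by
          rw [hg₂def]; exact fc_sub (hf2i.add hv₁i) intervalIntegrable_const k
        rw [h1, fc_add hf2i hv₁i k, fc_const C0 hk, sub_zero, hfcv₁k]
      have hfcv₂k : fc v₂ k = (Complex.I * k)⁻¹ * (fc f₂ k + (Complex.I * k)⁻¹ * d k) := by
        rw [hv₂def, fc_primitive (memL2_integrableOn hg₂L2) hk, hfcg₂0, sub_zero, hfcg₂k]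
      rw [hfch k, hfcv₂k]
      by_cases h2 : 2 ≤ |k|
      · -- |k| ≥ 2
        have hsign : Int.sign k = 1 ∨ Int.sign k = -1 := by
          rcases lt_trichotomy k 0 with h | h | h
          · exact Or.inr (Int.sign_eq_neg_one_iff_neg.mpr h)
          · exact absurd h hk
          · exact Or.inl (Int.sign_eq_one_iff_pos.mpr h)
        have habs : ((|(k:ℝ)| : ℝ) : ℂ) = ((Int.sign k : ℤ) : ℂ) * (k:ℂ) := by
          rcases hsign with h | h
          · have hkpos : (0:ℤ) < k := Int.sign_eq_one_iff_pos.mp h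
            rw [h, abs_of_pos (by exact_mod_cast hkpos : (0:ℝ) < (k:ℝ))]
            push_cast; ring
          · have hkneg : k < 0 := Int.sign_eq_neg_one_iff_neg.mp h
            rw [h, abs_of_neg (by exact_mod_cast hkneg : ((k:ℝ)) < 0)]
            push_cast; ring
        have hss : ((Int.sign k : ℤ) : ℂ) * ((Int.sign k : ℤ) : ℂ) = 1 := by
          rcases hsign with h | h <;> rw [h] <;> norm_num
        have hdenZ : k - Int.sign k ≠ 0 := by
          rcases hsign with h | h
          · have hkpos : (0:ℤ) < k := Int.sign_eq_one_iff_pos.mp h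
            have : 2 ≤ k := by rwa [abs_of_pos hkpos] at h2
            omega
          · have hkneg : k < 0 := Int.sign_eq_neg_one_iff_neg.mp h
            have h3 : 2 ≤ -k := by rwa [abs_of_neg hkneg] at h2
            omega
        have hden : (k:ℂ) - ((Int.sign k : ℤ) : ℂ) ≠ 0 := by
          rw [show (k:ℂ) - ((Int.sign k : ℤ) : ℂ) = ((k - Int.sign k : ℤ) : ℂ) by push_cast; ring]
          exact_mod_cast hdenZ
        have hdk : d k = ((k:ℂ) * fc f₁ k + Complex.I * ((|(k:ℝ)| : ℝ) : ℂ) * fc f₂ k)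
            / ((k:ℂ) - ((Int.sign k : ℤ) : ℂ)) := by
          rw [hddef]; exact if_pos h2
        rw [hdk, habs]
        field_simp
        linear_combination (-((Int.sign k : ℤ):ℂ) * (fc f₁ k
          + Complex.I * (k:ℂ) * fc f₂ k)) * Complex.I_sq
      · -- k = ±1
        have hk1 : k = 1 ∨ k = -1 := by
          have ha : |k| ≤ 1 := by omega
          have hb' := abs_le.1 ha
          omega
        have hdk : d k = 0 := by
          rw [hddef]; exact if_neg h2
        rcases hk1 with h1 | h1
        · subst h1
          rw [hdk]
          norm_num
          linear_combination hA1
        · subst h1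
          rw [hdk]
          norm_num
          field_simp
          linear_combination hA2
  refine ⟨v₁, v₂, g₁, g₂, hh, hv₁H1, hv₂H1, ⟨hhL2, hmult⟩, ?_, ?_⟩
  · refine Filter.Eventually.of_forall fun x => ?_
    rw [hhdef]
    simp only
    ring
  · refine Filter.Eventually.of_forall fun x => ?_
    rw [hg₂def]
    simp only
    rw [← hC0def]
    ring
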